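/- Under the stability condition c̄ > (I−Rᵀ)⁻¹ē + ε·1 (ε > 0) and boundedness of queue lengths, the cumulative unused service diverges: for every queue i, ∫₀^t y(i)(s) ds → ∞ as t → ∞. -/

import Mathlib

open Set Filter MeasureTheory Matrix

/-- A solution of the network queueing dynamics (in integrated form). -/
def IsNetworkSolution (n : ℕ) (R : Matrix (Fin n) (Fin n) ℝ)
    (τ : Fin n → Fin n → ℝ) (e c : Fin n → ℝ → ℝ)
    (x b : Fin n → ℝ → ℝ) : Prop :=
  (∀ i, Continuous (x i)) ∧
  (∀ i, Measurable (b i)) ∧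
  (∀ i (s t : ℝ), IntervalIntegrable (b i) volume s t) ∧
  (∀ i t, 0 ≤ t →
    x i t = x i 0 + ∫ s in (0:ℝ)..t,
      (e i s - b i s + ∑ j, b j (s - τ j i) * R j i)) ∧
  (∀ i t, 0 ≤ t → 0 ≤ x i t) ∧
  (∀ i t, 0 ≤ b i t) ∧
  (∀ i t, 0 ≤ t → b i t ≤ c i t) ∧
  (∀ i t, 0 ≤ t → 0 < x i t → b i t = c i t)

lemma auxPowNonneg {n : ℕ} (A : Matrix (Fin n) (Fin n) ℝ) (hA : ∀ i j, 0 ≤ A i j) :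
    ∀ k i j, 0 ≤ (A ^ k) i j := by
  intro k
  induction k with
  | zero =>
    intro i j
    rw [pow_zero]
    by_cases h : i = j <;> simp [Matrix.one_apply, h]
  | succ k ih =>
    intro i j
    rw [pow_succ, Matrix.mul_apply]
    exact Finset.sum_nonneg fun l _ => mul_nonneg (ih i l) (hA l j)

lemma auxIsUnit {n : ℕ} (A : Matrix (Fin n) (Fin n) ℝ)
    (hpow : Tendsto (fun k : ℕ => A ^ k) atTop (nhds 0)) : IsUnit (1 - A) := by
  rw [← Matrix.mulVec_injective_iff_isUnit]
  intro v w hvw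
  have h0 : (1 - A) *ᵥ (v - w) = 0 := by
    rw [Matrix.mulVec_sub, hvw, sub_self]
  set u := v - w with hu
  have hfix : A *ᵥ u = u := by
    have h1 : (1 - A) *ᵥ u = 1 *ᵥ u - A *ᵥ u := Matrix.sub_mulVec 1 A u
    rw [h0, Matrix.one_mulVec] at h1
    funext i
    have := congrFun h1 i
    simp only [Pi.zero_apply, Pi.sub_apply] at this
    linarith
  have hfixk : ∀ k : ℕ, (A ^ k) *ᵥ u = u := by
    intro k
    induction k with
    | zero => simp
    | succ k ih => rw [pow_succ', ← Matrix.mulVec_mulVec, ih, hfix]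
  have hlim : Tendsto (fun k : ℕ => (A ^ k) *ᵥ u) atTop
      (nhds ((0 : Matrix (Fin n) (Fin n) ℝ) *ᵥ u)) :=
    ((Continuous.matrix_mulVec continuous_id continuous_const).tendsto 0).comp hpow
  have : u = (0 : Matrix (Fin n) (Fin n) ℝ) *ᵥ u := by
    apply tendsto_nhds_unique (f := fun k : ℕ => (A ^ k) *ᵥ u) (l := atTop)
    · simp only [hfixk]
      exact tendsto_const_nhds
    · exact hlim
  rw [Matrix.zero_mulVec] at this
  rw [← sub_eq_zero, ← hu, this]

lemma auxInvNonneg {n : ℕ} (A : Matrix (Fin n) (Fin n) ℝ) (hA : ∀ i j, 0 ≤ A i j)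
    (hpow : Tendsto (fun k : ℕ => A ^ k) atTop (nhds 0)) :
    ∀ i j, 0 ≤ (1 - A)⁻¹ i j := by
  have hu := auxIsUnit A hpow
  have hdet : IsUnit (1 - A).det := (Matrix.isUnit_iff_isUnit_det _).mp hu
  have heq : ∀ m : ℕ, (∑ k ∈ Finset.range m, A ^ k) = (1 - A ^ m) * (1 - A)⁻¹ := by
    intro m
    have h1 : (∑ k ∈ Finset.range m, A ^ k) * (1 - A) = 1 - A ^ m := geom_sum_mul_neg A m
    calc (∑ k ∈ Finset.range m, A ^ k)
        = (∑ k ∈ Finset.range m, A ^ k) * ((1 - A) * (1 - A)⁻¹) := by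
          rw [Matrix.mul_nonsing_inv _ hdet, mul_one]
      _ = (1 - A ^ m) * (1 - A)⁻¹ := by rw [← mul_assoc, h1]
  have hlim : Tendsto (fun m : ℕ => ∑ k ∈ Finset.range m, A ^ k) atTop (nhds ((1 - A)⁻¹)) := by
    simp only [heq]
    have hc : Continuous fun M : Matrix (Fin n) (Fin n) ℝ => (1 - M) * (1 - A)⁻¹ :=
      (continuous_const.sub continuous_id).matrix_mul continuous_const
    have h2 := (hc.tendsto 0).comp hpow
    simpa only [Function.comp_def, sub_zero, one_mul] using h2
  intro i j
  have hent : Tendsto (fun m : ℕ => (∑ k ∈ Finset.range m, A ^ k) i j) atTop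
      (nhds ((1 - A)⁻¹ i j)) :=
    ((Continuous.matrix_elem continuous_id i j).tendsto _).comp hlim
  refine ge_of_tendsto' hent fun m => ?_
  have : (∑ k ∈ Finset.range m, A ^ k) i j = ∑ k ∈ Finset.range m, (A ^ k) i j := by
    simp [Matrix.sum_apply]
  rw [this]
  exact Finset.sum_nonneg fun k _ => auxPowNonneg A hA k i j

/-- Under the stability condition and boundedness of queue lengths, the
cumulative unused service `∫₀ᵗ y(i)(s) ds = ∫₀ᵗ (c(i) − b(i))` diverges at
every queue. -/
theorem cumulative_unused_service_diverges
    (n : ℕ) (R : Matrix (Fin n) (Fin n) ℝ)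
    (hRnn : ∀ i j, 0 ≤ R i j)
    (hRpow : Tendsto (fun k : ℕ => R ^ k) atTop (nhds 0))
    (τ : Fin n → Fin n → ℝ) (τmin τmax : ℝ)
    (hτmin : 0 < τmin) (hτ : ∀ i j, τmin ≤ τ i j ∧ τ i j ≤ τmax)
    (T : ℝ) (hT : 0 < T)
    (e c : Fin n → ℝ → ℝ)
    (he : ∀ i, Continuous (e i)) (hc : ∀ i, Continuous (c i))
    (henn : ∀ i t, 0 ≤ e i t) (hcnn : ∀ i t, 0 ≤ c i t)
    (heper : ∀ i t, e i (t + T) = e i t)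
    (hcper : ∀ i t, c i (t + T) = c i t)
    (ε : ℝ) (hε : 0 < ε)
    (hstab : ∀ i,
      ((1 - R.transpose)⁻¹ *ᵥ (fun j => (1 / T) * ∫ t in (0:ℝ)..T, e j t)) i + ε
        < (1 / T) * ∫ t in (0:ℝ)..T, c i t)
    (x b : Fin n → ℝ → ℝ)
    (hsol : IsNetworkSolution n R τ e c x b)
    (M : ℝ) (hbd : ∀ i t, 0 ≤ t → x i t ≤ M) :
    ∀ i, Tendsto (fun t : ℝ => ∫ s in (0:ℝ)..t, (c i s - b i s)) atTop atTop := by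
  obtain ⟨hxc, hbm, hbint, hdyn, hxnn, hbnn, hbc, hbx⟩ := hsol
  -- matrix facts
  have hApow : Tendsto (fun k : ℕ => R.transpose ^ k) atTop (nhds 0) := by
    have h1 := ((Continuous.matrix_transpose
      (continuous_id)).tendsto (0 : Matrix (Fin n) (Fin n) ℝ)).comp hRpow
    simp only [Function.comp_def, Matrix.transpose_zero] at h1
    have heq : (fun k : ℕ => R.transpose ^ k) = fun k : ℕ => (R ^ k).transpose := by
      funext k; exact (Matrix.transpose_pow R k).symm
    rw [heq]; exact h1
  have hAnn : ∀ i j, 0 ≤ R.transpose i j := fun i j => hRnn j i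
  have hu := auxIsUnit _ hApow
  have hdet : IsUnit (1 - R.transpose).det := (Matrix.isUnit_iff_isUnit_det _).mp hu
  have hSnn := auxInvNonneg _ hAnn hApow
  have hSmul : (1 - R.transpose)⁻¹ * (1 - R.transpose) = 1 := Matrix.nonsing_inv_mul _ hdet
  -- integrability
  have heint : ∀ j (s t : ℝ), IntervalIntegrable (e j) volume s t :=
    fun j s t => (he j).intervalIntegrable s t
  have hcint : ∀ j (s t : ℝ), IntervalIntegrable (c j) volume s t :=
    fun j s t => (hc j).intervalIntegrable s t
  have hsint : ∀ j i' (s t : ℝ), IntervalIntegrable (fun u => b j (u - τ j i')) volume s t := by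
    intro j i' s t
    have h1 := (hbint j (s - τ j i') (t - τ j i')).comp_sub_right (τ j i')
    simpa using h1
  -- shifted integral bound
  have hshiftle : ∀ j i' (t : ℝ), 0 ≤ t →
      (∫ s in (0:ℝ)..t, b j (s - τ j i')) ≤
        (∫ s in (-(τ j i'))..(0:ℝ), b j s) + ∫ s in (0:ℝ)..t, b j s := by
    intro j i' t ht
    have hd : 0 < τ j i' := lt_of_lt_of_le hτmin (hτ j i').1
    rw [intervalIntegral.integral_comp_sub_right (fun s => b j s) (τ j i')]
    have hadj1 := intervalIntegral.integral_add_adjacent_intervals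
      (hbint j (0 - τ j i') (t - τ j i')) (hbint j (t - τ j i') t)
    have hnn1 : 0 ≤ ∫ s in (t - τ j i')..t, b j s :=
      intervalIntegral.integral_nonneg (by linarith) (fun u _ => hbnn j u)
    have hadj2 := intervalIntegral.integral_add_adjacent_intervals
      (hbint j (0 - τ j i') 0) (hbint j 0 t)
    rw [zero_sub] at hadj1 hadj2 ⊢
    linarith
  -- integral decomposition
  have hIdecomp : ∀ i (t : ℝ),
      (∫ s in (0:ℝ)..t, (e i s - b i s + ∑ j, b j (s - τ j i) * R j i)) =
        (∫ s in (0:ℝ)..t, e i s) - (∫ s in (0:ℝ)..t, b i s)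
          + ∑ j, (∫ s in (0:ℝ)..t, b j (s - τ j i)) * R j i := by
    intro i t
    have hg : IntervalIntegrable (fun s => ∑ j, b j (s - τ j i) * R j i) volume 0 t := by
      have h := IntervalIntegrable.sum (μ := volume) (a := (0:ℝ)) (b := t) Finset.univ
        (fun j _ => (hsint j i 0 t).mul_const (R j i))
      have h2 : (∑ j : Fin n, fun u => b j (u - τ j i) * R j i)
          = fun s => ∑ j : Fin n, b j (s - τ j i) * R j i := by
        funext s; simp
      rwa [h2] at h
    rw [intervalIntegral.integral_add ((heint i 0 t).sub (hbint i 0 t)) hg,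
      intervalIntegral.integral_sub (heint i 0 t) (hbint i 0 t),
      intervalIntegral.integral_finset_sum
        fun j _ => (hsint j i 0 t).mul_const (R j i)]
    congr 1
    exact Finset.sum_congr rfl fun j _ => intervalIntegral.integral_mul_const (R j i) _
  -- key scalar inequality
  have hkey : ∀ i (t : ℝ), 0 ≤ t →
      (∫ s in (0:ℝ)..t, b i s) ≤ x i 0 + (∫ s in (0:ℝ)..t, e i s)
        + ∑ j, ((∫ s in (-(τ j i))..(0:ℝ), b j s) + ∫ s in (0:ℝ)..t, b j s) * R j i := by
    intro i t ht
    have h0 := hxnn i t ht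
    rw [hdyn i t ht, hIdecomp i t] at h0
    have hsum : ∑ j, (∫ s in (0:ℝ)..t, b j (s - τ j i)) * R j i ≤
        ∑ j, ((∫ s in (-(τ j i))..(0:ℝ), b j s) + ∫ s in (0:ℝ)..t, b j s) * R j i :=
      Finset.sum_le_sum fun j _ => mul_le_mul_of_nonneg_right (hshiftle j i t ht) (hRnn j i)
    linarith
  -- vector step
  have hvec : ∀ (t : ℝ), 0 ≤ t → ∀ i,
      (∫ s in (0:ℝ)..t, b i s) ≤ ∑ j, (1 - R.transpose)⁻¹ i j *
        (x j 0 + (∫ s in (0:ℝ)..t, e j s)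
          + ∑ l, (∫ s in (-(τ l j))..(0:ℝ), b l s) * R l j) := by
    intro t ht i
    set v : Fin n → ℝ := fun j => ∫ s in (0:ℝ)..t, b j s with hv
    set w : Fin n → ℝ := fun j => x j 0 + (∫ s in (0:ℝ)..t, e j s)
      + ∑ l, (∫ s in (-(τ l j))..(0:ℝ), b l s) * R l j with hw
    have hmv : ∀ i', ((1 - R.transpose) *ᵥ v) i' = v i' - ∑ j, R j i' * v j := by
      intro i'
      rw [Matrix.sub_mulVec, Matrix.one_mulVec]
      rfl
    have hle : ∀ i', ((1 - R.transpose) *ᵥ v) i' ≤ w i' := by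
      intro i'
      rw [hmv i']
      have hk := hkey i' t ht
      have hexp : ∑ j, ((∫ s in (-(τ j i'))..(0:ℝ), b j s) + ∫ s in (0:ℝ)..t, b j s) * R j i'
          = (∑ j, (∫ s in (-(τ j i'))..(0:ℝ), b j s) * R j i')
            + ∑ j, R j i' * ∫ s in (0:ℝ)..t, b j s := by
        rw [← Finset.sum_add_distrib]
        exact Finset.sum_congr rfl fun j _ => by ring
      rw [hexp] at hk
      show (∫ s in (0:ℝ)..t, b i' s) - (∑ j, R j i' * ∫ s in (0:ℝ)..t, b j s)
        ≤ x i' 0 + (∫ s in (0:ℝ)..t, e i' s)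
          + ∑ l, (∫ s in (-(τ l i'))..(0:ℝ), b l s) * R l i'
      linarith
    have h2 : ((1 - R.transpose)⁻¹ *ᵥ ((1 - R.transpose) *ᵥ v)) i
        ≤ ∑ j, (1 - R.transpose)⁻¹ i j * w j := by
      have hrw : ((1 - R.transpose)⁻¹ *ᵥ ((1 - R.transpose) *ᵥ v)) i
          = ∑ j, (1 - R.transpose)⁻¹ i j * ((1 - R.transpose) *ᵥ v) j := rfl
      rw [hrw]
      exact Finset.sum_le_sum fun j _ => mul_le_mul_of_nonneg_left (hle j) (hSnn i j)
    have h3 : (1 - R.transpose)⁻¹ *ᵥ ((1 - R.transpose) *ᵥ v) = v := by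
      rw [Matrix.mulVec_mulVec, hSmul, Matrix.one_mulVec]
    rw [h3] at h2
    exact h2
  -- periodic upper bound for e
  have hEbound : ∀ j (t : ℝ), (∫ s in (0:ℝ)..t, e j s) ≤
      sSup ((fun t => ∫ s in (0:ℝ)..t, e j s) '' Icc 0 T)
        + t * ((1 / T) * ∫ s in (0:ℝ)..T, e j s) := by
    intro j t
    have hper : Function.Periodic (e j) T := heper j
    have h := hper.integral_le_sSup_add_zsmul_of_pos (heint j 0 T) hT t
    have hnn : 0 ≤ ∫ s in (0:ℝ)..T, e j s :=
      intervalIntegral.integral_nonneg hT.le fun u _ => henn j u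
    have hfl : (⌊t / T⌋ : ℝ) * ∫ s in (0:ℝ)..T, e j s
        ≤ (t / T) * ∫ s in (0:ℝ)..T, e j s :=
      mul_le_mul_of_nonneg_right (Int.floor_le _) hnn
    rw [zsmul_eq_mul] at h
    have hid : t * ((1 / T) * ∫ s in (0:ℝ)..T, e j s)
        = (t / T) * ∫ s in (0:ℝ)..T, e j s := by ring
    linarith
  -- periodic lower bound for c
  have hCbound : ∀ i (t : ℝ),
      sInf ((fun t => ∫ s in (0:ℝ)..t, c i s) '' Icc 0 T) - (∫ s in (0:ℝ)..T, c i s)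
        + t * ((1 / T) * ∫ s in (0:ℝ)..T, c i s) ≤ ∫ s in (0:ℝ)..t, c i s := by
    intro i t
    have hper : Function.Periodic (c i) T := hcper i
    have h := hper.sInf_add_zsmul_le_integral_of_pos (hcint i 0 T) hT t
    have hnn : 0 ≤ ∫ s in (0:ℝ)..T, c i s :=
      intervalIntegral.integral_nonneg hT.le fun u _ => hcnn i u
    have hfl : (t / T - 1) * ∫ s in (0:ℝ)..T, c i s
        ≤ (⌊t / T⌋ : ℝ) * ∫ s in (0:ℝ)..T, c i s :=
      mul_le_mul_of_nonneg_right (by linarith [Int.sub_one_lt_floor (t / T)]) hnn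
    rw [zsmul_eq_mul] at h
    have hid : t * ((1 / T) * ∫ s in (0:ℝ)..T, c i s)
        = (t / T) * ∫ s in (0:ℝ)..T, c i s := by ring
    linarith
  -- final assembly
  intro i
  have hσstab : (∑ j, (1 - R.transpose)⁻¹ i j * ((1 / T) * ∫ s in (0:ℝ)..T, e j s)) + ε
      < (1 / T) * ∫ s in (0:ℝ)..T, c i s := by
    have h := hstab i
    have hmv : ((1 - R.transpose)⁻¹ *ᵥ (fun j => (1 / T) * ∫ t in (0:ℝ)..T, e j t)) i
        = ∑ j, (1 - R.transpose)⁻¹ i j * ((1 / T) * ∫ s in (0:ℝ)..T, e j s) := rfl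
    rw [hmv] at h
    exact h
  set σ : ℝ := ∑ j, (1 - R.transpose)⁻¹ i j * ((1 / T) * ∫ s in (0:ℝ)..T, e j s) with hσ
  set D : ℝ := ∑ j, (1 - R.transpose)⁻¹ i j *
      (x j 0 + sSup ((fun t => ∫ s in (0:ℝ)..t, e j s) '' Icc 0 T)
        + ∑ l, (∫ s in (-(τ l j))..(0:ℝ), b l s) * R l j) with hD
  have hBub : ∀ t : ℝ, 0 ≤ t → (∫ s in (0:ℝ)..t, b i s) ≤ D + t * σ := by
    intro t ht
    refine (hvec t ht i).trans ?_
    have hstep : ∀ j, (1 - R.transpose)⁻¹ i j *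
        (x j 0 + (∫ s in (0:ℝ)..t, e j s)
          + ∑ l, (∫ s in (-(τ l j))..(0:ℝ), b l s) * R l j)
        ≤ (1 - R.transpose)⁻¹ i j *
        (x j 0 + (sSup ((fun t => ∫ s in (0:ℝ)..t, e j s) '' Icc 0 T)
            + t * ((1 / T) * ∫ s in (0:ℝ)..T, e j s))
          + ∑ l, (∫ s in (-(τ l j))..(0:ℝ), b l s) * R l j) := by
      intro j
      refine mul_le_mul_of_nonneg_left ?_ (hSnn i j)
      have := hEbound j t
      linarith
    calc ∑ j, (1 - R.transpose)⁻¹ i j *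
          (x j 0 + (∫ s in (0:ℝ)..t, e j s)
            + ∑ l, (∫ s in (-(τ l j))..(0:ℝ), b l s) * R l j)
        ≤ ∑ j, (1 - R.transpose)⁻¹ i j *
          (x j 0 + (sSup ((fun t => ∫ s in (0:ℝ)..t, e j s) '' Icc 0 T)
              + t * ((1 / T) * ∫ s in (0:ℝ)..T, e j s))
            + ∑ l, (∫ s in (-(τ l j))..(0:ℝ), b l s) * R l j) :=
          Finset.sum_le_sum fun j _ => hstep j
      _ = D + t * σ := by
          rw [hD, hσ, Finset.mul_sum, ← Finset.sum_add_distrib]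
          exact Finset.sum_congr rfl fun j _ => by ring
  set Kc : ℝ := D - (sInf ((fun t => ∫ s in (0:ℝ)..t, c i s) '' Icc 0 T)
    - (∫ s in (0:ℝ)..T, c i s)) with hKc
  have hlow : ∀ t : ℝ, 0 ≤ t → ε * t - Kc ≤ ∫ s in (0:ℝ)..t, (c i s - b i s) := by
    intro t ht
    rw [intervalIntegral.integral_sub (hcint i 0 t) (hbint i 0 t)]
    have h1 := hCbound i t
    have h2 := hBub t ht
    have h3 : t * (σ + ε) ≤ t * ((1 / T) * ∫ s in (0:ℝ)..T, c i s) :=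
      mul_le_mul_of_nonneg_left hσstab.le ht
    have h4 : t * (σ + ε) = t * σ + t * ε := by ring
    rw [hKc]
    linarith
  have htend : Tendsto (fun t : ℝ => ε * t - Kc) atTop atTop := by
    have h1 : Tendsto (fun t : ℝ => ε * t) atTop atTop :=
      (tendsto_id (α := ℝ)).const_mul_atTop hε
    simpa [sub_eq_add_neg] using tendsto_atTop_add_const_right atTop (-Kc) h1
  refine tendsto_atTop_mono' atTop ?_ htend
  filter_upwards [eventually_ge_atTop (0:ℝ)] with t ht
  exact hlow t ht
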